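/- Let f(z) = z^n with n ≥ 2 and let f_t(z) = z^n + t(a+ib)z̄ with t > 0 and (a,b) ≠ (0,0). Define G_t(z) = −2i(f'(z))² conj(f''(z)) + 2ti(a+ib) f''(z) conj(f'(z)). Then G_t(z) = −2i n²(n−1) |z|^{2n−4} (n z^n − t(a+ib) z̄), and the set of nonzero zeros of G_t has exactly n + 1 elements. -/

import Mathlib

open Complex

noncomputable section

/-- `G_t` for `f(z) = z^n`, via `f'(z) = n z^{n-1}`, `f''(z) = n(n-1) z^{n-2}`. -/
def GtPow (n : ℕ) (a b t : ℝ) (z : ℂ) : ℂ :=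
  -2 * Complex.I * ((n : ℂ) * z ^ (n - 1)) ^ 2 *
      (starRingEnd ℂ) ((n : ℂ) * ((n : ℂ) - 1) * z ^ (n - 2)) +
    2 * t * Complex.I * (a + Complex.I * b) * ((n : ℂ) * ((n : ℂ) - 1) * z ^ (n - 2)) *
      (starRingEnd ℂ) ((n : ℂ) * z ^ (n - 1))

theorem Gt_of_power (n : ℕ) (hn : 2 ≤ n) (a b t : ℝ) (ht : 0 < t) (hab : (a, b) ≠ (0, 0)) :
    (∀ z : ℂ,
      GtPow n a b t z =
        -2 * Complex.I * (n : ℂ) ^ 2 * ((n : ℂ) - 1) *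
          (((‖z‖ : ℝ) : ℂ) ^ (2 * n - 4)) *
          ((n : ℂ) * z ^ n - (t : ℂ) * (a + Complex.I * b) * (starRingEnd ℂ) z)) ∧
    {z : ℂ | z ≠ 0 ∧ GtPow n a b t z = 0}.ncard = n + 1 := by
  obtain ⟨m, rfl⟩ : ∃ m, n = m + 2 := ⟨n - 2, by omega⟩
  have e1 : m + 2 - 1 = m + 1 := by omega
  have e2 : m + 2 - 2 = m := by omega
  have e3 : 2 * (m + 2) - 4 = 2 * m := by omega
  -- the key identity
  have key : ∀ z : ℂ,
      GtPow (m + 2) a b t z =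
        -2 * Complex.I * ((m + 2 : ℕ) : ℂ) ^ 2 * (((m + 2 : ℕ) : ℂ) - 1) *
          (((‖z‖ : ℝ) : ℂ) ^ (2 * (m + 2) - 4)) *
          (((m + 2 : ℕ) : ℂ) * z ^ (m + 2) -
            (t : ℂ) * (a + Complex.I * b) * (starRingEnd ℂ) z) := by
    intro z
    have habs : (((‖z‖ : ℝ) : ℂ)) ^ (2 * (m + 2) - 4) = (z * (starRingEnd ℂ) z) ^ m := by
      have hb : (((‖z‖ : ℝ) : ℂ)) ^ 2 = z * (starRingEnd ℂ) z := by
        rw [Complex.mul_conj]; norm_cast; exact Complex.sq_norm z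
      rw [e3, pow_mul, hb]
    rw [GtPow, habs, e1, e2]
    simp only [map_mul, map_pow, Complex.conj_natCast, map_sub, map_one]
    push_cast
    ring
  refine ⟨key, ?_⟩
  -- setup
  set c : ℂ := (t : ℂ) * (a + Complex.I * b) with hc_def
  have hab' : (a : ℂ) + Complex.I * b ≠ 0 := by
    intro h
    apply hab
    have ha : a = 0 := by
      have := congrArg Complex.re h; simpa using this
    have hb : b = 0 := by
      have := congrArg Complex.im h; simpa using this
    simp [ha, hb]
  have hc : c ≠ 0 := mul_ne_zero (by exact_mod_cast ht.ne') hab'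
  have hcabs : 0 < ‖c‖ := norm_pos_iff.mpr hc
  set r : ℝ := (‖c‖ / (m + 2)) ^ (((m + 1 : ℕ) : ℝ))⁻¹ with hr_def
  have hbase : 0 < ‖c‖ / (m + 2) := div_pos hcabs (by positivity)
  have hr : 0 < r := Real.rpow_pos_of_pos hbase _
  have hrpow : r ^ (m + 1) = ‖c‖ / (m + 2) :=
    Real.rpow_inv_natCast_pow hbase.le (by omega)
  set w : ℂ := c / (m + 2) * (r : ℂ) ^ 2 with hw_def
  have hm2 : ((m + 2 : ℕ) : ℂ) ≠ 0 := by exact_mod_cast (by omega : (m + 2 : ℕ) ≠ 0)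
  have hw : w ≠ 0 := by
    apply mul_ne_zero (div_ne_zero hc ?_) (pow_ne_zero _ (by exact_mod_cast hr.ne'))
    exact_mod_cast hm2
  have habsw : ‖w‖ = r ^ (m + 3) := by
    rw [hw_def, norm_mul, norm_div, norm_pow, Complex.norm_real, Real.norm_eq_abs, abs_of_pos hr]
    have : ‖((m : ℂ) + 2)‖ = (m : ℝ) + 2 := by
      rw [show ((m : ℂ) + 2) = ((m + 2 : ℕ) : ℂ) by push_cast; ring, Complex.norm_natCast]
      push_cast; ring
    rw [this, ← hrpow]; ring
  -- set equality
  have hset : {z : ℂ | z ≠ 0 ∧ GtPow (m + 2) a b t z = 0} = {z : ℂ | z ^ (m + 3) = w} := by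
    ext z
    simp only [Set.mem_setOf_eq]
    constructor
    · rintro ⟨hz0, hG⟩
      rw [key z] at hG
      have habsz : ‖z‖ ≠ 0 := norm_ne_zero_iff.mpr hz0
      have hpref : -2 * Complex.I * ((m + 2 : ℕ) : ℂ) ^ 2 * (((m + 2 : ℕ) : ℂ) - 1) *
          (((‖z‖ : ℝ) : ℂ) ^ (2 * (m + 2) - 4)) ≠ 0 := by
        apply mul_ne_zero
        apply mul_ne_zero
        apply mul_ne_zero
        · simpa using Complex.I_ne_zero
        · exact pow_ne_zero _ hm2
        · push_cast
          intro h
          have : ((m : ℂ) + 2) = 1 := by linear_combination h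
          have := congrArg Complex.re this
          simp at this
          linarith [this]
        · exact pow_ne_zero _ (by exact_mod_cast habsz)
      have heq : ((m + 2 : ℕ) : ℂ) * z ^ (m + 2) = c * (starRingEnd ℂ) z := by
        have := (mul_eq_zero.mp hG).resolve_left hpref
        rw [sub_eq_zero] at this
        rw [this, hc_def]
      -- modulus
      have hmod : ‖z‖ = r := by
        have h1 : ‖(((m + 2 : ℕ) : ℂ) * z ^ (m + 2))‖ =
            ‖(c * (starRingEnd ℂ) z)‖ := by rw [heq]
        rw [norm_mul, norm_pow, Complex.norm_natCast, norm_mul, Complex.norm_conj] at h1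
        have hm2R : ((m : ℝ) + 2) ≠ 0 := by positivity
        push_cast at h1
        have h2 : (‖z‖) ^ (m + 1) = ‖c‖ / ((m : ℝ) + 2) := by
          rw [eq_div_iff hm2R]
          apply mul_right_cancel₀ habsz
          calc ‖z‖ ^ (m + 1) * ((m : ℝ) + 2) * ‖z‖
              = ((m : ℝ) + 2) * ‖z‖ ^ (m + 2) := by ring
            _ = ‖c‖ * ‖z‖ := h1
        rw [← hrpow] at h2
        exact (pow_left_inj₀ (norm_nonneg z) hr.le (by omega)).mp h2
      -- conclude
      have hzz : z * (starRingEnd ℂ) z = (r : ℂ) ^ 2 := by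
        rw [Complex.mul_conj]
        norm_cast
        rw [← Complex.sq_norm, hmod]
      have hm2' : ((m : ℂ) + 2) ≠ 0 := by exact_mod_cast hm2
      apply mul_right_cancel₀ hm2'
      rw [hw_def]
      calc z ^ (m + 3) * ((m : ℂ) + 2) = z * (((m + 2 : ℕ) : ℂ) * z ^ (m + 2)) := by
            push_cast; ring
        _ = z * (c * (starRingEnd ℂ) z) := by rw [heq]
        _ = c * (z * (starRingEnd ℂ) z) := by ring
        _ = c * (r : ℂ) ^ 2 := by rw [hzz]
        _ = c / ((m : ℂ) + 2) * (r : ℂ) ^ 2 * ((m : ℂ) + 2) := by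
            rw [mul_right_comm (c / ((m : ℂ) + 2)) ((r : ℂ) ^ 2) ((m : ℂ) + 2),
              div_mul_cancel₀ c hm2']
    · intro hz
      have hz0 : z ≠ 0 := by
        intro h; rw [h] at hz; simp [zero_pow] at hz; exact hw hz.symm
      have hmod : ‖z‖ = r := by
        have h1 : ‖z‖ ^ (m + 3) = r ^ (m + 3) := by
          rw [← norm_pow, hz, habsw]
        exact (pow_left_inj₀ (norm_nonneg z) hr.le (by omega)).mp h1
      have hzz : z * (starRingEnd ℂ) z = (r : ℂ) ^ 2 := by
        rw [Complex.mul_conj]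
        norm_cast
        rw [← Complex.sq_norm, hmod]
      refine ⟨hz0, ?_⟩
      rw [key z]
      apply mul_eq_zero_of_right
      rw [sub_eq_zero]
      have hm2' : ((m : ℂ) + 2) ≠ 0 := by exact_mod_cast hm2
      apply mul_left_cancel₀ hz0
      calc z * (((m + 2 : ℕ) : ℂ) * z ^ (m + 2)) = ((m : ℂ) + 2) * z ^ (m + 3) := by
            push_cast; ring
        _ = ((m : ℂ) + 2) * w := by rw [hz]
        _ = c * (r : ℂ) ^ 2 := by
            rw [hw_def, ← mul_assoc, mul_comm ((m : ℂ) + 2) (c / ((m : ℂ) + 2)),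
              div_mul_cancel₀ c hm2']
        _ = c * (z * (starRingEnd ℂ) z) := by rw [hzz]
        _ = z * (c * (starRingEnd ℂ) z) := by ring
  rw [hset]
  -- counting
  obtain ⟨ζ, hζ⟩ : ∃ ζ : ℂ, IsPrimitiveRoot ζ (m + 3) :=
    ⟨_, Complex.isPrimitiveRoot_exp (m + 3) (by omega)⟩
  obtain ⟨α, hα⟩ := IsAlgClosed.exists_pow_nat_eq w (n := m + 3) (by omega)
  have hnodup := hζ.nthRoots_nodup (a := w) hw
  have hsetF : {z : ℂ | z ^ (m + 3) = w} = ↑(Polynomial.nthRoots (m + 3) w).toFinset := by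
    ext z
    simp [Polynomial.mem_nthRoots (by omega : 0 < m + 3)]
  rw [hsetF, Set.ncard_coe_finset, Multiset.toFinset_card_of_nodup hnodup,
    hζ.card_nthRoots, if_pos ⟨α, hα⟩]

end
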